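/- Let F be an asymmetric norm on ℝⁿ whose closed unit ball {y : F(y) ≤ 1} is a strictly convex set, let α ∈ ℝⁿ, and suppose the function α ↦ F_*(α)² is differentiable at α with gradient g. Then F(g) = 2 F_*(α). -/

import Mathlib

open scoped RealInnerProductSpace

/-- `ℝⁿ` with the Euclidean inner product. -/
abbrev En (n : ℕ) := EuclideanSpace ℝ (Fin n)

/-- An asymmetric norm on `ℝⁿ`. -/
def IsAsymNorm {n : ℕ} (F : En n → ℝ) : Prop :=
  (∀ y, 0 ≤ F y) ∧ (∀ y, F y = 0 ↔ y = 0) ∧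
  (∀ l : ℝ, 0 < l → ∀ y, F (l • y) = l * F y) ∧
  (∀ y₁ y₂, F (y₁ + y₂) ≤ F y₁ + F y₂)

/-- The dual asymmetric norm `F_*(α) = sup {⟨α, y⟩ : F y ≤ 1}`. -/
noncomputable def dualNorm {n : ℕ} (F : En n → ℝ) (α : En n) : ℝ :=
  sSup ((fun y => ⟪α, y⟫) '' {y | F y ≤ 1})

/-- The subdifferential of `F²` at `y`. -/
def subdiffSq {n : ℕ} (F : En n → ℝ) (y : En n) : Set (En n) :=
  {α | ∀ z, (F y) ^ 2 + ⟪α, z - y⟫ ≤ (F z) ^ 2}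

/-- A subgradient of a function having a gradient equals the gradient. -/
lemma grad_unique {n : ℕ} {f : En n → ℝ} {g h α : En n}
    (hg : HasGradientAt f g α) (hh : ∀ β, f α + ⟪h, β - α⟫ ≤ f β) : h = g := by
  have key : ∀ v : En n, ⟪h, v⟫ ≤ ⟪g, v⟫ := by
    intro v
    have hline : HasDerivAt (fun t : ℝ => α + t • v) v 0 := by
      simpa using ((hasDerivAt_id (0:ℝ)).smul_const v).const_add α
    have hφ : HasDerivAt (fun t : ℝ => f (α + t • v)) ⟪g, v⟫ 0 := by
      have := HasFDerivAt.comp_hasDerivAt 0 (by simpa using hg.hasFDerivAt) hline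
      simpa [InnerProductSpace.toDual_apply_apply, Function.comp_def] using this
    have hslope : Filter.Tendsto (slope (fun t : ℝ => f (α + t • v)) 0)
        (nhdsWithin 0 (Set.Ioi 0)) (nhds ⟪g, v⟫) :=
      (hasDerivAt_iff_tendsto_slope.mp hφ).mono_left
        (nhdsWithin_mono _ (fun t ht => ne_of_gt ht))
    refine ge_of_tendsto hslope ?_
    filter_upwards [self_mem_nhdsWithin] with t (ht : 0 < t)
    have h1 := hh (α + t • v)
    have h2 : ⟪h, (α + t • v) - α⟫ = t * ⟪h, v⟫ := by
      rw [add_sub_cancel_left, real_inner_smul_right]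
    rw [h2] at h1
    rw [slope_def_field]
    simp only [zero_smul, add_zero, sub_zero]
    rw [le_div_iff₀ ht]
    nlinarith [h1]
  have hle := key (h - g)
  have : ⟪h - g, h - g⟫ ≤ 0 := by
    rw [inner_sub_left] at *
    linarith
  have := real_inner_self_nonpos.mp this
  exact sub_eq_zero.mp this

/-- If the unit ball of `F` is strictly convex and `F_*²` has gradient `g` at `α`,
then `F(g) = 2 F_*(α)`. -/
theorem norm_gradient_dual_sq {n : ℕ} (F : En n → ℝ) (hF : IsAsymNorm F)
    (hconv : StrictConvex ℝ {y : En n | F y ≤ 1})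
    (α : En n) (g : En n)
    (hg : HasGradientAt (fun β => (dualNorm F β) ^ 2) g α) :
    F g = 2 * dualNorm F α := by
  obtain ⟨hF0, hFeq, hFhom, hFadd⟩ := hF
  have hF00 : F 0 = 0 := (hFeq 0).mpr rfl
  set S : Set (En n) := {y | F y ≤ 1} with hSdef
  have h0S : (0 : En n) ∈ S := by simp [hSdef, hF00]
  -- F is convex
  have hFconv : ConvexOn ℝ Set.univ F := by
    refine ⟨convex_univ, fun x _ y _ a b ha hb hab => ?_⟩
    rcases eq_or_lt_of_le ha with ha0 | ha0
    · simp [← ha0, show b = 1 by linarith]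
    rcases eq_or_lt_of_le hb with hb0 | hb0
    · simp [← hb0, show a = 1 by linarith]
    calc F (a • x + b • y) ≤ F (a • x) + F (b • y) := hFadd _ _
      _ = a * F x + b * F y := by rw [hFhom a ha0, hFhom b hb0]
  have hFcont : Continuous F := by
    have := hFconv.continuousOn isOpen_univ
    exact continuousOn_univ.mp this
  -- lower bound m‖y‖ ≤ F y
  obtain ⟨m, hm0, hmF⟩ : ∃ m > 0, ∀ y : En n, m * ‖y‖ ≤ F y := by
    rcases subsingleton_or_nontrivial (En n) with hsub | hnt
    · exact ⟨1, one_pos, fun y => by simp [Subsingleton.elim y 0, hF00, hF0 y]⟩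
    · have hsph : IsCompact (Metric.sphere (0 : En n) 1) := isCompact_sphere 0 1
      have hne : (Metric.sphere (0 : En n) 1).Nonempty :=
        NormedSpace.sphere_nonempty.mpr zero_le_one
      obtain ⟨y₀, hy₀mem, hy₀min⟩ := hsph.exists_isMinOn hne hFcont.continuousOn
      have hy₀ne : y₀ ≠ 0 := by
        intro h
        rw [h] at hy₀mem; simp at hy₀mem
      have hm0 : 0 < F y₀ := lt_of_le_of_ne (hF0 y₀) (fun h => hy₀ne ((hFeq y₀).mp h.symm))
      refine ⟨F y₀, hm0, fun y => ?_⟩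
      rcases eq_or_ne y 0 with rfl | hy
      · simp [hF00]
      · have hny : 0 < ‖y‖ := norm_pos_iff.mpr hy
        have : (‖y‖⁻¹ : ℝ) • y ∈ Metric.sphere (0 : En n) 1 := by
          simp [norm_smul, abs_of_pos (inv_pos.mpr hny), inv_mul_cancel₀ hny.ne']
        have hmin := isMinOn_iff.mp hy₀min _ this
        have hkey : F y₀ ≤ ‖y‖⁻¹ * F y := by
          rw [← hFhom _ (inv_pos.mpr hny) y]; exact hmin
        calc F y₀ * ‖y‖ ≤ (‖y‖⁻¹ * F y) * ‖y‖ :=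
            mul_le_mul_of_nonneg_right hkey (norm_nonneg y)
          _ = F y := by field_simp
  -- S is compact
  have hSclosed : IsClosed S := isClosed_le hFcont continuous_const
  have hSbdd : Bornology.IsBounded S := by
    refine (Metric.isBounded_iff_subset_closedBall 0).mpr ⟨m⁻¹, fun y hy => ?_⟩
    have h1 : m * ‖y‖ ≤ 1 := le_trans (hmF y) hy
    simp only [Metric.mem_closedBall, dist_zero_right]
    calc ‖y‖ = m⁻¹ * (m * ‖y‖) := by field_simp
      _ ≤ m⁻¹ * 1 := mul_le_mul_of_nonneg_left h1 (by positivity)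
      _ = m⁻¹ := mul_one _
  have hScompact : IsCompact S := Metric.isCompact_of_isClosed_isBounded hSclosed hSbdd
  -- the image is compact and nonempty, sSup attained
  have himage : ∀ β : En n, IsCompact ((fun y => ⟪β, y⟫) '' S) := fun β =>
    hScompact.image (Continuous.inner continuous_const continuous_id)
  have himne : ((fun y => ⟪α, y⟫) '' S).Nonempty := ⟨_, ⟨0, h0S, rfl⟩⟩
  have hgreat : IsGreatest ((fun y => ⟪α, y⟫) '' S) (dualNorm F α) :=
    (himage α).isGreatest_sSup himne
  obtain ⟨⟨y₀, hy₀S, hy₀eq⟩, hub⟩ := hgreat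
  -- basic facts about G := dualNorm F
  have hGle : ∀ (β : En n) (y : En n), y ∈ S → ⟪β, y⟫ ≤ dualNorm F β := by
    intro β y hy
    exact le_csSup (himage β).bddAbove ⟨y, hy, rfl⟩
  have hGnonneg : ∀ β : En n, 0 ≤ dualNorm F β := by
    intro β
    have := hGle β 0 h0S
    simpa using this
  set c := dualNorm F α with hc
  have hc0 : 0 ≤ c := hGnonneg α
  -- key subgradient
  have hsub : ∀ β : En n, c ^ 2 + ⟪(2 * c) • y₀, β - α⟫ ≤ (dualNorm F β) ^ 2 := by
    intro β
    have h1 : ⟪(2 * c) • y₀, β - α⟫ = (2 * c) * (⟪β, y₀⟫ - ⟪α, y₀⟫) := by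
      rw [real_inner_smul_left, inner_sub_right, real_inner_comm y₀ β, real_inner_comm y₀ α]
    have hy₀eq' : ⟪α, y₀⟫ = c := hy₀eq
    rw [h1, hy₀eq']
    have h2 : ⟪β, y₀⟫ ≤ dualNorm F β := hGle β y₀ hy₀S
    nlinarith [hGnonneg β, sq_nonneg (dualNorm F β - c)]
  have hgeq : (2 * c) • y₀ = g := grad_unique hg hsub
  rcases eq_or_lt_of_le hc0 with hc0' | hcpos
  · -- c = 0, so g = 0
    rw [← hgeq, ← hc0']
    simp [hF00]
  · -- c > 0; F y₀ = 1
    have hFy₀ : F y₀ = 1 := by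
      have hy₀F : F y₀ ≤ 1 := hy₀S
      rcases eq_or_lt_of_le hy₀F with h1 | h1
      · exact h1
      · exfalso
        have hy₀pos : 0 < F y₀ := by
          rcases lt_or_eq_of_le (hF0 y₀) with h | h
          · exact h
          · exfalso
            have : y₀ = 0 := (hFeq y₀).mp h.symm
            rw [this] at hy₀eq
            simp at hy₀eq
            rw [← hy₀eq] at hcpos
            exact lt_irrefl 0 hcpos
        set y' := (F y₀)⁻¹ • y₀ with hy'
        have hy'S : y' ∈ S := by
          have : F y' = 1 := by
            rw [hy', hFhom _ (inv_pos.mpr hy₀pos), inv_mul_cancel₀ hy₀pos.ne']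
          simp [hSdef, this]
        have := hGle α y' hy'S
        have hy₀eq' : ⟪α, y₀⟫ = c := hy₀eq
        rw [hy', real_inner_smul_right, hy₀eq'] at this
        have hgt : 1 < (F y₀)⁻¹ := (one_lt_inv₀ hy₀pos).mpr h1
        nlinarith
    rw [← hgeq, hFhom _ (by positivity), hFy₀, mul_one]
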